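/- Let (Y, d) be a length space, y₀ ∈ Y, L > 0, and let r be a real number with 0 < r < L and 2r < Diam(Y) (where Diam(Y) = sup_{x,y∈Y} d(x,y), possibly infinite). Then in the product metric space Y ×₂ ℝ, the set B((y₀,0), L) \ B((y₀,0), r) is path connected, where B(z, ρ) denotes the open metric ball of radius ρ centered at z. -/

import Mathlib

open Real Set

/-- A metric space is a length space if every pair of points is joined by a
minimizing geodesic. -/
def IsLengthSpace (Y : Type*) [MetricSpace Y] : Prop :=
  ∀ x y : Y, ∃ γ : ℝ → Y, γ 0 = x ∧ γ (dist x y) = y ∧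
    ∀ s ∈ Set.Icc (0 : ℝ) (dist x y), ∀ t ∈ Set.Icc (0 : ℝ) (dist x y),
      dist (γ s) (γ t) = |s - t|

section Aux

variable {Y : Type*} [MetricSpace Y]

/-- The point of `WithLp 2 (Y × ℝ)` corresponding to `(y, t)`. -/
noncomputable def Pt (y : Y) (t : ℝ) : WithLp 2 (Y × ℝ) :=
  (WithLp.equiv 2 (Y × ℝ)).symm (y, t)

lemma lp2_dist (y z : Y) (s t : ℝ) :
    dist (Pt y s) (Pt z t) = Real.sqrt (dist y z ^ 2 + (s - t) ^ 2) := by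
  rw [WithLp.prod_dist_eq_add (by norm_num : (0:ℝ) < (2 : ENNReal).toReal)]
  have h2 : ((2 : ENNReal)).toReal = 2 := by norm_num
  rw [h2, Real.sqrt_eq_rpow]
  have : dist (Pt y s).snd (Pt z t).snd = |s - t| := Real.dist_eq s t
  rw [show (Pt y s).fst = y from rfl, show (Pt z t).fst = z from rfl, this,
    Real.rpow_two, Real.rpow_two, sq_abs]

lemma continuous_Pt : Continuous (fun p : Y × ℝ => Pt p.1 p.2) :=
  (WithLp.prod_continuous_toLp 2 Y ℝ).comp continuous_id

/-- Membership in the annulus. -/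
lemma mem_annulus_iff {y₀ : Y} {L r : ℝ} (hL : 0 < L) (hr : 0 < r) (y : Y) (t : ℝ) :
    Pt y t ∈ Metric.ball (Pt y₀ 0) L \ Metric.ball (Pt y₀ 0) r ↔
      r ^ 2 ≤ dist y y₀ ^ 2 + t ^ 2 ∧ dist y y₀ ^ 2 + t ^ 2 < L ^ 2 := by
  have hd : dist (Pt y t) (Pt y₀ 0) = Real.sqrt (dist y y₀ ^ 2 + t ^ 2) := by
    rw [lp2_dist]; norm_num
  constructor
  · rintro ⟨h1, h2⟩
    rw [Metric.mem_ball, hd, Real.sqrt_lt' hL] at h1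
    rw [Metric.mem_ball, hd, not_lt, Real.le_sqrt hr.le (by positivity)] at h2
    exact ⟨h2, h1⟩
  · rintro ⟨h1, h2⟩
    constructor
    · rw [Metric.mem_ball, hd, Real.sqrt_lt' hL]; exact h2
    · rw [Metric.mem_ball, hd, not_lt, Real.le_sqrt hr.le (by positivity)]; exact h1

/-- Joining along a continuous curve defined on `uIcc a b`. -/
lemma joinedIn_of_curve {X : Type*} [TopologicalSpace X] {S : Set X} {f : ℝ → X} {a b : ℝ}
    (hf : ContinuousOn f (uIcc a b)) (hmem : ∀ u ∈ uIcc a b, f u ∈ S) :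
    JoinedIn S (f a) (f b) := by
  have hmap : ∀ s : unitInterval, (1 - (s:ℝ)) * a + s * b ∈ uIcc a b := by
    intro s
    rw [← segment_eq_uIcc]
    exact ⟨1 - s, s, by simpa using s.2.2, s.2.1, by ring, rfl⟩
  refine ⟨⟨⟨fun s => f ((1 - (s:ℝ)) * a + (s:ℝ) * b), ?_⟩, ?_, ?_⟩, ?_⟩
  · apply hf.comp_continuous
    · exact ((continuous_const.sub continuous_subtype_val).mul continuous_const).add
        (continuous_subtype_val.mul continuous_const)
    · exact hmap
  · simp
  · simp
  · intro s; exact hmem _ (hmap s)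

/-- The circular arc in the "slice" of the product determined by a geodesic. -/
lemma arc_joined {y₀ z : Y} {γ : ℝ → Y} {r L ρ σ m : ℝ}
    (hγ0 : γ 0 = y₀)
    (hgeo : ∀ s ∈ Set.Icc (0:ℝ) (dist y₀ z), ∀ t ∈ Set.Icc (0:ℝ) (dist y₀ z),
      dist (γ s) (γ t) = |s - t|)
    (hσ : σ = 1 ∨ σ = -1) (hm0 : 0 ≤ m) (hmD : m ≤ dist y₀ z) (hmρ : m ≤ ρ)
    (hr : 0 < r) (hL : 0 < L) (hrρ : r ≤ ρ) (hρL : ρ < L) :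
    JoinedIn (Metric.ball (Pt y₀ 0) L \ Metric.ball (Pt y₀ 0) r)
      (Pt y₀ (σ * ρ)) (Pt (γ m) (σ * Real.sqrt (ρ ^ 2 - m ^ 2))) := by
  set D := dist y₀ z with hD
  have hρ0 : 0 < ρ := lt_of_lt_of_le hr hrρ
  set f : ℝ → WithLp 2 (Y × ℝ) := fun u => Pt (γ u) (σ * Real.sqrt (ρ ^ 2 - u ^ 2)) with hf
  have hγcont : ContinuousOn γ (Set.Icc 0 D) := by
    refine (LipschitzOnWith.of_dist_le_mul (K := 1) ?_).continuousOn
    intro s hs t ht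
    simp [hgeo s hs t ht, Real.dist_eq]
  have h0 : f 0 = Pt y₀ (σ * ρ) := by
    rw [hf]
    simp only [hγ0]
    norm_num [Real.sqrt_sq hρ0.le]
  rw [← h0]
  have huIcc : uIcc (0:ℝ) m = Set.Icc 0 m := by rw [uIcc_of_le hm0]
  apply joinedIn_of_curve (f := f)
  · rw [huIcc]
    refine Continuous.comp_continuousOn (g := fun p : Y × ℝ => Pt p.1 p.2)
      (f := fun u : ℝ => ((γ u, σ * Real.sqrt (ρ ^ 2 - u ^ 2)) : Y × ℝ))
      continuous_Pt ?_
    refine ContinuousOn.prodMk ?_ ?_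
    · exact hγcont.mono (Set.Icc_subset_Icc le_rfl hmD)
    · exact (continuous_const.mul (Real.continuous_sqrt.comp
        (continuous_const.sub (continuous_pow 2)))).continuousOn
  · rw [huIcc]
    rintro u ⟨hu0, hum⟩
    have huD : u ∈ Set.Icc (0:ℝ) D := ⟨hu0, le_trans hum hmD⟩
    have hdist : dist (γ u) y₀ = u := by
      have := hgeo u huD 0 ⟨le_rfl, dist_nonneg⟩
      rw [hγ0] at this
      rw [this, sub_zero, abs_of_nonneg hu0]
    rw [hf]
    rw [mem_annulus_iff hL hr]
    have hsq : Real.sqrt (ρ ^ 2 - u ^ 2) ^ 2 = ρ ^ 2 - u ^ 2 :=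
      Real.sq_sqrt (by nlinarith [le_trans hum hmρ])
    have hσ2 : σ ^ 2 = 1 := by rcases hσ with h | h <;> simp [h]
    rw [hdist, mul_pow, hσ2, one_mul, hsq]
    constructor
    · nlinarith
    · nlinarith

/-- Vertical segment above `y₀` inside the annulus. -/
lemma vertical_joined (y₀ : Y) {r L ρ ρ₀ σ : ℝ} (hr : 0 < r) (hL : 0 < L)
    (hσ : σ = 1 ∨ σ = -1) (hrρ : r ≤ ρ) (hρL : ρ < L) (hρ₀r : r ≤ ρ₀) (hρ₀L : ρ₀ < L) :
    JoinedIn (Metric.ball (Pt y₀ 0) L \ Metric.ball (Pt y₀ 0) r)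
      (Pt y₀ (σ * ρ)) (Pt y₀ (σ * ρ₀)) := by
  apply joinedIn_of_curve (f := fun u : ℝ => Pt y₀ u)
  · exact ((WithLp.prod_continuous_toLp 2 Y ℝ).comp (Continuous.prodMk_right y₀)).continuousOn
  · intro u hu
    rw [Set.mem_uIcc] at hu
    rw [mem_annulus_iff hL hr, dist_self]
    rcases hσ with h | h <;> rw [h] at hu <;>
      rcases hu with ⟨h1, h2⟩ | ⟨h1, h2⟩ <;>
      exact ⟨by nlinarith, by nlinarith⟩

end Aux

theorem ball_diff_ball_pathConnected (Y : Type*) [MetricSpace Y]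
    (hY : IsLengthSpace Y) (y₀ : Y) (L r : ℝ) (hL : 0 < L) (hr : 0 < r)
    (hrL : r < L)
    (hdiam : ENNReal.ofReal (2 * r) < EMetric.diam (Set.univ : Set Y)) :
    IsPathConnected
      (Metric.ball ((WithLp.equiv 2 (Y × ℝ)).symm (y₀, 0)) L \
        Metric.ball ((WithLp.equiv 2 (Y × ℝ)).symm (y₀, 0)) r) := by
  show IsPathConnected (Metric.ball (Pt y₀ 0) L \ Metric.ball (Pt y₀ 0) r)
  set A : Set (WithLp 2 (Y × ℝ)) :=
    Metric.ball (Pt y₀ 0) L \ Metric.ball (Pt y₀ 0) r with hA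
  -- find y₁ with dist y₀ y₁ > r
  obtain ⟨y₁, hy₁⟩ : ∃ y₁ : Y, r < dist y₀ y₁ := by
    by_contra h
    push_neg at h
    have : EMetric.diam (Set.univ : Set Y) ≤ ENNReal.ofReal (2 * r) := by
      apply EMetric.diam_le
      intro a _ b _
      rw [edist_dist]
      apply ENNReal.ofReal_le_ofReal
      calc dist a b ≤ dist a y₀ + dist y₀ b := dist_triangle _ _ _
        _ ≤ r + r := add_le_add (by rw [dist_comm]; exact h a) (h b)
        _ = 2 * r := by ring
    exact absurd hdiam (not_lt.mpr this)
  set D₁ := dist y₀ y₁ with hD₁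
  set ρ₀ := min ((r + L) / 2) D₁ with hρ₀
  have hρ₀r : r < ρ₀ := lt_min (by linarith) hy₁
  have hρ₀L : ρ₀ < L := lt_of_le_of_lt (min_le_left _ _) (by linarith)
  have hρ₀D : ρ₀ ≤ D₁ := min_le_right _ _
  have hρ₀pos : 0 < ρ₀ := lt_trans hr hρ₀r
  obtain ⟨γ₁, hγ₁0, hγ₁D, hγ₁⟩ := hY y₀ y₁
  set q := γ₁ ρ₀ with hq
  set x₀ := Pt q 0 with hx₀def
  have hqd : dist q y₀ = ρ₀ := by
    have := hγ₁ ρ₀ ⟨hρ₀pos.le, hρ₀D⟩ 0 ⟨le_rfl, dist_nonneg⟩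
    rw [hγ₁0] at this
    rw [hq, this, sub_zero, abs_of_nonneg hρ₀pos.le]
  have hx₀ : x₀ ∈ A := by
    rw [hA, hx₀def, mem_annulus_iff hL hr, hqd]
    constructor
    · nlinarith
    · nlinarith
  have harc₁ : ∀ σ : ℝ, σ = 1 ∨ σ = -1 → JoinedIn A (Pt y₀ (σ * ρ₀)) x₀ := by
    intro σ hσ
    have := arc_joined (r := r) (L := L) (ρ := ρ₀) (m := ρ₀) hγ₁0 hγ₁ hσ
      hρ₀pos.le hρ₀D le_rfl hr hL hρ₀r.le hρ₀L
    have hend : Pt (γ₁ ρ₀) (σ * Real.sqrt (ρ₀ ^ 2 - ρ₀ ^ 2)) = x₀ := by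
      rw [hx₀def, hq]; norm_num
    rwa [hend] at this
  refine ⟨x₀, hx₀, ?_⟩
  intro x hx
  have hxPt : x = Pt x.fst x.snd := rfl
  set y := x.fst with hy
  set t := x.snd with ht
  rw [hxPt] at hx ⊢
  rw [hA, mem_annulus_iff hL hr] at hx
  obtain ⟨hx1, hx2⟩ := hx
  set d := dist y y₀ with hd
  set ρ := Real.sqrt (d ^ 2 + t ^ 2) with hρdef
  have hρsq : ρ ^ 2 = d ^ 2 + t ^ 2 := Real.sq_sqrt (by positivity)
  have hrρ : r ≤ ρ := (Real.le_sqrt hr.le (by positivity)).mpr hx1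
  have hρL : ρ < L := by rw [hρdef, Real.sqrt_lt' hL]; exact hx2
  have hρpos : 0 < ρ := lt_of_lt_of_le hr hrρ
  have hdρ : d ≤ ρ := by
    rw [hρdef]
    rw [Real.le_sqrt dist_nonneg (by positivity)]
    nlinarith
  set σ : ℝ := if 0 ≤ t then 1 else -1 with hσdef
  have hσ : σ = 1 ∨ σ = -1 := by
    rw [hσdef]; split_ifs <;> simp
  have hts : σ * Real.sqrt (ρ ^ 2 - d ^ 2) = t := by
    have h1 : ρ ^ 2 - d ^ 2 = t ^ 2 := by rw [hρsq]; ring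
    rw [h1, Real.sqrt_sq_eq_abs, hσdef]
    split_ifs with h
    · rw [one_mul, abs_of_nonneg h]
    · push_neg at h
      rw [neg_one_mul, abs_of_neg h, neg_neg]
  obtain ⟨γ, hγ0, hγD, hγgeo⟩ := hY y₀ y
  have hdcomm : dist y₀ y = d := dist_comm y₀ y
  -- arc joining (Pt y₀ (σρ)) to (Pt y t)
  have j₁ : JoinedIn A (Pt y₀ (σ * ρ)) (Pt y t) := by
    have := arc_joined (r := r) (L := L) (ρ := ρ) (m := dist y₀ y) hγ0 hγgeo hσ
      dist_nonneg le_rfl (by rw [hdcomm]; exact hdρ) hr hL hrρ hρL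
    have hend : Pt (γ (dist y₀ y)) (σ * Real.sqrt (ρ ^ 2 - dist y₀ y ^ 2)) = Pt y t := by
      rw [hγD, hdcomm, hts]
    rwa [hend] at this
  -- vertical segment joining (Pt y₀ (σρ)) to (Pt y₀ (σρ₀))
  have j₂ : JoinedIn A (Pt y₀ (σ * ρ)) (Pt y₀ (σ * ρ₀)) :=
    vertical_joined y₀ hr hL hσ hrρ hρL hρ₀r.le hρ₀L
  exact ((harc₁ σ hσ).symm.trans j₂.symm).trans j₁
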